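/- Let U be a vector space over ℂ, z a nonzero complex number, k a nonnegative integer, and let f(x) = ∑_{n∈ℤ} f_n x^{-n-1} and g(x) = ∑_{n∈ℤ} g_n x^{-n-1} be formal Laurent series with coefficients in U. Suppose f(x) ∈ U((x^{-1})) (only finitely many positive powers of x appear) and (x-z)^k f(x) = (x-z)^k g(x). Then for every n ∈ ℤ, the coefficient f_n lies in the linear span of {g_m | m ≤ n+k}. -/
import Mathlib


/-- If `f(x) = ∑ₙ fₙ x^{-n-1} ∈ U((x⁻¹))` (only finitely many positive powers
of `x`, i.e. `fₙ = 0` for `n` sufficiently small) and `(x-z)^k f(x) = (x-z)^k g(x)`, then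
each `fₙ` lies in the span of `{g_m | m ≤ n + k}`. -/
theorem stmt1 (U : Type*) [AddCommGroup U] [Module ℂ U] (z : ℂ) (hz : z ≠ 0) (k : ℕ)
    (f g : ℤ → U)
    (hf : ∃ N : ℤ, ∀ n ≤ N, f n = 0)
    (hfg : ∀ n : ℤ,
      ∑ i ∈ Finset.range (k + 1), ((k.choose i : ℂ) * (-z) ^ i) • f (n + k - i)
        = ∑ i ∈ Finset.range (k + 1), ((k.choose i : ℂ) * (-z) ^ i) • g (n + k - i)) :
    ∀ n : ℤ, f n ∈ Submodule.span ℂ (g '' {m : ℤ | m ≤ n + k}) := by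
  obtain ⟨N, hN⟩ := hf
  have key : ∀ d : ℕ, ∀ n : ℤ, n ≤ N + d →
      f n ∈ Submodule.span ℂ (g '' {m : ℤ | m ≤ n + k}) := by
    intro d
    induction d with
    | zero =>
      intro n hn
      rw [hN n (by omega)]
      exact Submodule.zero_mem _
    | succ d ih =>
      intro n hn
      rcases lt_or_eq_of_le hn with h | h
      · exact ih n (by push_cast at h ⊢; omega)
      · -- n = N + d + 1
        have hfg' := hfg (n - k)
        have harg : ∀ i : ℕ, n - (k:ℤ) + k - i = n - i := by intro i; ring
        simp only [harg] at hfg'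
        rw [Finset.sum_range_succ', Finset.sum_range_succ'] at hfg'
        simp only [Nat.choose_zero_right, pow_zero, Nat.cast_one, one_mul, mul_one,
          Nat.cast_zero, sub_zero, one_smul] at hfg'
        have hfn : f n = (∑ i ∈ Finset.range k,
              ((k.choose (i+1) : ℂ) * (-z) ^ (i+1)) • g (n - ((i+1:ℕ):ℤ)))
            + g n
            - ∑ i ∈ Finset.range k,
              ((k.choose (i+1) : ℂ) * (-z) ^ (i+1)) • f (n - ((i+1:ℕ):ℤ)) := by
          rw [← hfg']; abel
        rw [hfn]
        have hspan : Submodule.span ℂ (g '' {m : ℤ | m ≤ n + k}) = _ := rfl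
        apply sub_mem
        · apply add_mem
          · apply Submodule.sum_mem
            intro i _
            apply Submodule.smul_mem
            apply Submodule.subset_span
            exact ⟨n - ((i+1:ℕ):ℤ), by simp only [Set.mem_setOf_eq]; push_cast; omega, rfl⟩
          · exact Submodule.subset_span ⟨n, by simp only [Set.mem_setOf_eq]; omega, rfl⟩
        · apply Submodule.sum_mem
          intro i _
          apply Submodule.smul_mem
          have hmem := ih (n - ((i+1:ℕ):ℤ)) (by push_cast at h ⊢; omega)
          refine Submodule.span_mono ?_ hmem
          apply Set.image_mono
          intro m hm
          simp only [Set.mem_setOf_eq] at hm ⊢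
          omega
  intro n
  exact key (n - N).toNat n (by omega)
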